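/- Let ψ be C² and 1-periodic. The completely adhering graph curve γ̃(t) = (t, ψ(t)) satisfies E[γ̃] ≤ ε²‖ψ''‖_∞² + α(1 + (1/2)(‖ψ''‖_∞/2)²) = ((8ε² + α)/(8α) · ‖ψ''‖_∞² + 1)·α. -/

import Mathlib

open MeasureTheory Real Set

noncomputable section

/-- The (signed) curvature of a planar curve `γ` at parameter `t`. -/
def curvature (γ : ℝ → ℝ × ℝ) (t : ℝ) : ℝ :=
  ((deriv γ t).1 * (deriv (deriv γ) t).2 - (deriv γ t).2 * (deriv (deriv γ) t).1)
    / ‖deriv γ t‖ ^ 3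

/-- Admissible curves above the substrate ψ: regular curves of Sobolev class H²
(modelled as C²) confined in the closed epigraph of ψ, satisfying the periodic
boundary conditions x(0)=0, x(1)=1, y(0)=y(1), γ'(0)=γ'(1). -/
def Admissible (ψ : ℝ → ℝ) (γ : ℝ → ℝ × ℝ) : Prop :=
  ContDiff ℝ 2 γ ∧ (∀ t ∈ Icc (0:ℝ) 1, deriv γ t ≠ 0) ∧
  (∀ t ∈ Icc (0:ℝ) 1, ψ (γ t).1 ≤ (γ t).2) ∧
  (γ 0).1 = 0 ∧ (γ 1).1 = 1 ∧ (γ 0).2 = (γ 1).2 ∧ deriv γ 0 = deriv γ 1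

/-- The contact potential: Θ = α on the graph of ψ, Θ = 1 off it. -/
def contactPotential (ψ : ℝ → ℝ) (α : ℝ) (p : ℝ × ℝ) : ℝ :=
  if p.2 = ψ p.1 then α else 1

/-- Total energy of one period: E[γ] = ∫ [ε²κ² + Θ(γ)] ds. -/
def Energy (ψ : ℝ → ℝ) (α ε : ℝ) (γ : ℝ → ℝ × ℝ) : ℝ :=
  ∫ t in Icc (0:ℝ) 1, (ε ^ 2 * curvature γ t ^ 2 + contactPotential ψ α (γ t)) * ‖deriv γ t‖

/-- Length of one period of the curve. -/
def Length (γ : ℝ → ℝ × ℝ) : ℝ := ∫ t in Icc (0:ℝ) 1, ‖deriv γ t‖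

/-- A curve is a graph curve if x'(t) > 0 for all t. -/
def IsGraph (γ : ℝ → ℝ × ℝ) : Prop := ∀ t ∈ Icc (0:ℝ) 1, 0 < (deriv γ t).1


section Aux

lemma periodic_deriv' (f : ℝ → ℝ) (h : Function.Periodic f 1) :
    Function.Periodic (deriv f) 1 := by
  intro x
  rw [← deriv_comp_add_const f 1 x, funext h]

lemma deriv_small (ψ : ℝ → ℝ) (hψ : ContDiff ℝ 2 ψ) (hper : Function.Periodic ψ 1)
    {M : ℝ} (hM : ∀ x, |deriv (deriv ψ) x| ≤ M) (t : ℝ) : |deriv ψ t| ≤ M / 2 := by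
  have hψd : Differentiable ℝ ψ := hψ.differentiable two_ne_zero
  have hd1 : Differentiable ℝ (deriv ψ) := by
    have h2 : ContDiff ℝ ((1:ℕ∞)+1) ψ := by norm_num at hψ ⊢; exact hψ
    rw [contDiff_succ_iff_deriv] at h2
    exact h2.2.2.differentiable (by simp)
  have hc2 : Continuous (deriv (deriv ψ)) := by
    have h2 : ContDiff ℝ ((1:ℕ∞)+1) ψ := by norm_num at hψ ⊢; exact hψ
    rw [contDiff_succ_iff_deriv] at h2
    have h3 : ContDiff ℝ ((0:ℕ∞)+1) (deriv ψ) := by norm_num; exact h2.2.2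
    rw [contDiff_succ_iff_deriv] at h3
    exact h3.2.2.continuous
  -- global max of ψ
  obtain ⟨t₀, _, ht₀⟩ := isCompact_Icc.exists_isMaxOn (nonempty_Icc.2 zero_le_one)
    hψd.continuous.continuousOn
  have hglobal : ∀ x, ψ x ≤ ψ t₀ := by
    intro x
    have h1 : ψ (x - (⌊x⌋ : ℤ) * 1) = ψ x := hper.sub_int_mul_eq ⌊x⌋
    have h2 : x - (⌊x⌋ : ℤ) * 1 ∈ Icc (0:ℝ) 1 := by
      simp only [mul_one]
      constructor
      · linarith [Int.floor_le x]
      · linarith [Int.lt_floor_add_one x]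
    calc ψ x = ψ (x - (⌊x⌋ : ℤ) * 1) := h1.symm
    _ ≤ ψ t₀ := ht₀ h2
  have hzero : deriv ψ t₀ = 0 := by
    have : IsLocalMax ψ t₀ := Filter.Eventually.of_forall fun x => hglobal x
    exact this.deriv_eq_zero
  -- periodic deriv, zero at t₀ + k
  have hper1 : Function.Periodic (deriv ψ) 1 := periodic_deriv' ψ hper
  set s : ℝ := t₀ + round (t - t₀) with hs
  have hzs : deriv ψ s = 0 := by
    have := hper1.sub_int_mul_eq (x := s) (round (t - t₀))
    rw [hs] at this ⊢
    simpa [mul_one, hzero] using this.symm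
  have hts : |t - s| ≤ 1 / 2 := by
    have := abs_sub_round (t - t₀)
    rw [hs]
    have : t - (t₀ + (round (t - t₀) : ℤ)) = (t - t₀) - round (t - t₀) := by ring
    rw [this]
    exact abs_sub_round (t - t₀)
  have hftc : ∫ x in s..t, deriv (deriv ψ) x = deriv ψ t - deriv ψ s := by
    apply intervalIntegral.integral_deriv_eq_sub (fun x _ => hd1 x)
    exact hc2.intervalIntegrable s t
  have hbound : |∫ x in s..t, deriv (deriv ψ) x| ≤ M * |t - s| := by
    simp only [← Real.norm_eq_abs]
    apply intervalIntegral.norm_integral_le_of_norm_le_const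
    intro x _
    exact hM x
  rw [hftc, hzs, sub_zero] at hbound
  have hM0 : 0 ≤ M := le_trans (abs_nonneg _) (hM 0)
  calc |deriv ψ t| ≤ M * |t - s| := hbound
  _ ≤ M * (1/2) := by apply mul_le_mul_of_nonneg_left hts hM0
  _ = M / 2 := by ring

end Aux

/-- Energy bound for the completely adhering competitor γ̃(t) = (t, ψ(t)). -/
theorem adhering_competitor_energy_bound (ψ : ℝ → ℝ) (hψ : ContDiff ℝ 2 ψ)
    (hper : Function.Periodic ψ 1) (α ε : ℝ) (hα : 0 < α) (hα1 : α < 1) (hε : 0 < ε) :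
    Energy ψ α ε (fun t => (t, ψ t)) ≤
        ε ^ 2 * (⨆ x : ℝ, |deriv (deriv ψ) x|) ^ 2 +
          α * (1 + (1 / 2) * ((⨆ x : ℝ, |deriv (deriv ψ) x|) / 2) ^ 2) ∧
      ε ^ 2 * (⨆ x : ℝ, |deriv (deriv ψ) x|) ^ 2 +
          α * (1 + (1 / 2) * ((⨆ x : ℝ, |deriv (deriv ψ) x|) / 2) ^ 2) =
        ((8 * ε ^ 2 + α) / (8 * α) * (⨆ x : ℝ, |deriv (deriv ψ) x|) ^ 2 + 1) * α := by
  set M := (⨆ x : ℝ, |deriv (deriv ψ) x|) with hMdef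
  have hψd : Differentiable ℝ ψ := hψ.differentiable two_ne_zero
  have hd1 : Differentiable ℝ (deriv ψ) := by
    have h2 : ContDiff ℝ ((1:ℕ∞)+1) ψ := by norm_num at hψ ⊢; exact hψ
    rw [contDiff_succ_iff_deriv] at h2
    exact h2.2.2.differentiable (by simp)
  have hc2 : Continuous (deriv (deriv ψ)) := by
    have h2 : ContDiff ℝ ((1:ℕ∞)+1) ψ := by norm_num at hψ ⊢; exact hψ
    rw [contDiff_succ_iff_deriv] at h2
    have h3 : ContDiff ℝ ((0:ℕ∞)+1) (deriv ψ) := by norm_num; exact h2.2.2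
    rw [contDiff_succ_iff_deriv] at h3
    exact h3.2.2.continuous
  have hper2 : Function.Periodic (deriv (deriv ψ)) 1 :=
    periodic_deriv' _ (periodic_deriv' ψ hper)
  have hper2' : Function.Periodic (fun x => |deriv (deriv ψ) x|) 1 := by
    intro x; simp [hper2 x]
  have hbdd : BddAbove (range fun x => |deriv (deriv ψ) x|) :=
    (hper2'.isBounded_of_continuous one_ne_zero hc2.abs).bddAbove
  have hM : ∀ x, |deriv (deriv ψ) x| ≤ M := fun x => le_ciSup hbdd x
  have hM0 : 0 ≤ M := le_trans (abs_nonneg _) (hM 0)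
  have hM1 : ∀ t, |deriv ψ t| ≤ M / 2 := deriv_small ψ hψ hper hM
  -- derivatives of the curve
  have hγ1 : deriv (fun t : ℝ => (t, ψ t)) = fun t : ℝ => ((1:ℝ), deriv ψ t) := by
    funext t
    exact HasDerivAt.deriv ((hasDerivAt_id t).prodMk (hψd t).hasDerivAt)
  have hγ2 : deriv (deriv (fun t : ℝ => (t, ψ t))) =
      fun t : ℝ => ((0:ℝ), deriv (deriv ψ) t) := by
    rw [hγ1]; funext t
    exact HasDerivAt.deriv ((hasDerivAt_const t (1:ℝ)).prodMk (hd1 t).hasDerivAt)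
  set N : ℝ → ℝ := fun t => ‖((1:ℝ), deriv ψ t)‖ with hNdef
  have hN1 : ∀ t, 1 ≤ N t := by
    intro t
    have := norm_fst_le ((1:ℝ), deriv ψ t)
    exact le_trans (by simp) this
  have hN2 : ∀ t, N t ≤ 1 + (1/2) * (M/2)^2 := by
    intro t
    have h1 : N t = max ‖(1:ℝ)‖ ‖deriv ψ t‖ := rfl
    rw [h1]
    apply max_le
    · simp; positivity
    · have := hM1 t
      rw [Real.norm_eq_abs]
      nlinarith [sq_nonneg (M/2 - 1)]
  have hcurv : ∀ t, curvature (fun t : ℝ => (t, ψ t)) t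
      = deriv (deriv ψ) t / N t ^ 3 := by
    intro t
    simp only [curvature]
    rw [hγ2, hγ1]
    simp [hNdef]
  set C := ε^2*M^2 + α*(1 + (1/2)*(M/2)^2) with hCdef
  have hpoint : ∀ t, (ε ^ 2 * (deriv (deriv ψ) t / N t ^ 3) ^ 2 + α) * N t ≤ C := by
    intro t
    have hn1 := hN1 t
    have hn2 := hN2 t
    have hnne : N t ≠ 0 := by linarith
    have e1 : (ε ^ 2 * (deriv (deriv ψ) t / N t ^ 3) ^ 2 + α) * N t
        = ε^2 * (deriv (deriv ψ) t ^2 / N t ^5) + α * N t := by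
      field_simp
    have h5 : 1 ≤ N t ^ 5 := one_le_pow₀ hn1
    have e2 : deriv (deriv ψ) t ^2 / N t ^5 ≤ M^2 := by
      have ha : deriv (deriv ψ) t ^2 ≤ M^2 := by
        nlinarith [hM t, abs_nonneg (deriv (deriv ψ) t), sq_abs (deriv (deriv ψ) t)]
      calc deriv (deriv ψ) t ^2 / N t ^5 ≤ deriv (deriv ψ) t ^2 :=
            div_le_self (sq_nonneg _) h5
      _ ≤ M^2 := ha
    rw [e1, hCdef]
    have h6 := mul_le_mul_of_nonneg_left e2 (sq_nonneg ε)
    have h7 := mul_le_mul_of_nonneg_left hn2 hα.le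
    linarith
  have hEeq : Energy ψ α ε (fun t => (t, ψ t)) =
      ∫ t in Icc (0:ℝ) 1, (ε ^ 2 * (deriv (deriv ψ) t / N t ^ 3) ^ 2 + α) * N t := by
    unfold Energy
    congr 1
    funext t
    simp [contactPotential, hcurv t, hγ1, hNdef]
  have hNc : Continuous N := (continuous_const.prodMk hd1.continuous).norm
  have hgc : Continuous fun t => (ε ^ 2 * (deriv (deriv ψ) t / N t ^ 3) ^ 2 + α) * N t := by
    have hne : ∀ t, N t ^ 3 ≠ 0 := fun t => pow_ne_zero 3 (by linarith [hN1 t])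
    exact (((continuous_const.mul (((hc2.div (hNc.pow 3) hne)).pow 2)).add
      continuous_const).mul hNc)
  constructor
  · rw [hEeq]
    calc ∫ t in Icc (0:ℝ) 1, (ε ^ 2 * (deriv (deriv ψ) t / N t ^ 3) ^ 2 + α) * N t
        ≤ ∫ _ in Icc (0:ℝ) 1, C := by
          apply setIntegral_mono_on hgc.integrableOn_Icc (integrableOn_const ?_)
            measurableSet_Icc (fun t _ => hpoint t)
          simp [Real.volume_Icc]
    _ = C := by
          rw [setIntegral_const]
          simp [Real.volume_Icc]
    _ = ε ^ 2 * M ^ 2 + α * (1 + 1 / 2 * (M / 2) ^ 2) := by rw [hCdef]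
  · field_simp
    ring


end
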